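/- Let (a,b,c) be a Markov triple with b̄ an inverse of b modulo a². Then gcd(a², c²b̄² + 1) = a, and consequently a²/gcd(a², c²b̄²+1) = a. -/

import Mathlib

/-- For a Markov triple (a,b,c) and b̄ an inverse of b modulo a²,
gcd(a², c²b̄² + 1) = a, and hence a²/gcd(a², c²b̄² + 1) = a. -/
theorem stmt8 (a b c bb : ℤ) (ha : 0 < a) (hb : 0 < b) (hc : 0 < c)
    (h : a ^ 2 + b ^ 2 + c ^ 2 = 3 * a * b * c)
    (hbb : b * bb ≡ 1 [ZMOD a ^ 2]) :
    (Int.gcd (a ^ 2) (c ^ 2 * bb ^ 2 + 1) : ℤ) = a ∧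
      a ^ 2 / (Int.gcd (a ^ 2) (c ^ 2 * bb ^ 2 + 1) : ℤ) = a := by
  -- a² ∣ b*bb − 1
  have hdvd1 : a ^ 2 ∣ b * bb - 1 := Int.ModEq.dvd hbb.symm
  obtain ⟨m, hm⟩ := hdvd1
  -- coprimality of a and b
  have hab : IsCoprime a b := ⟨-(a * m), bb, by linarith [hm]⟩
  -- b² + c² = a * (3bc − a)
  have hsum : b ^ 2 + c ^ 2 = a * (3 * b * c - a) := by ring_nf; linarith [h]
  -- coprimality of a and c
  have hac : IsCoprime a c := by
    have h1 : IsCoprime a (c ^ 2) := by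
      have h2 : IsCoprime a (-(b ^ 2) + a * (3 * b * c - a)) :=
        (hab.pow_right (n := 2)).neg_right.add_mul_left_right _
      have : -(b ^ 2) + a * (3 * b * c - a) = c ^ 2 := by linarith [hsum]
      rwa [this] at h2
    exact IsCoprime.of_isCoprime_of_dvd_right h1 (dvd_pow_self c two_ne_zero)
  -- a is not divisible by 3
  have h3 : IsCoprime a 3 := by
    rw [Int.isCoprime_iff_gcd_eq_one]
    by_contra hg
    have h3a : (3 : ℤ) ∣ a := by
      have hd : (Int.gcd a 3 : ℤ) ∣ (3 : ℤ) := Int.gcd_dvd_right a 3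
      have hnd : Int.gcd a 3 ∣ 3 := by exact_mod_cast hd
      rcases (Nat.prime_three.eq_one_or_self_of_dvd _ hnd) with h1 | h1
      · exact absurd h1 hg
      · have := Int.gcd_dvd_left (a := a) (b := 3); rw [h1] at this
        exact_mod_cast this
    have hb3 : (3 : ℤ) ∣ b := by
      have hz : ((b : ZMod 3)) ^ 2 + ((c : ZMod 3)) ^ 2 = 0 := by
        have ha0 : ((a : ZMod 3)) = 0 := by
          rwa [ZMod.intCast_zmod_eq_zero_iff_dvd]
        have := congrArg (fun x : ℤ => (x : ZMod 3)) h
        push_cast at this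
        rw [ha0] at this
        ring_nf at this ⊢
        linear_combination this
      have : (b : ZMod 3) = 0 := by
        revert hz
        generalize (b : ZMod 3) = x
        generalize (c : ZMod 3) = y
        revert x y; decide
      rwa [ZMod.intCast_zmod_eq_zero_iff_dvd] at this
    have : IsUnit (3 : ℤ) := hab.isUnit_of_dvd' h3a hb3
    rw [Int.isUnit_iff] at this
    omega
  -- a coprime to 3bc − a
  have hkey : IsCoprime a (3 * b * c - a) := by
    have : IsCoprime a (3 * b * c) := (h3.mul_right hab).mul_right hac
    have h2 : IsCoprime a (3 * b * c + a * (-1)) := this.add_mul_left_right (-1)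
    have e : 3 * b * c + a * (-1) = 3 * b * c - a := by ring
    rwa [e] at h2
  -- a² ∣ b²bb² − 1
  have hdvd2 : a ^ 2 ∣ b ^ 2 * bb ^ 2 - 1 := by
    have : b ^ 2 * bb ^ 2 - 1 = (b * bb - 1) * (b * bb + 1) := by ring
    rw [this]; exact Dvd.dvd.mul_right ⟨m, hm⟩ _
  obtain ⟨n, hn⟩ := hdvd2
  set g : ℤ := (Int.gcd (a ^ 2) (c ^ 2 * bb ^ 2 + 1) : ℤ) with hgdef
  -- a ∣ c²bb² + 1
  have hadvd : a ∣ c ^ 2 * bb ^ 2 + 1 := by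
    have hmul : a ∣ b ^ 2 * (c ^ 2 * bb ^ 2 + 1) := by
      have e : b ^ 2 * (c ^ 2 * bb ^ 2 + 1) =
          c ^ 2 * (b ^ 2 * bb ^ 2 - 1) + (b ^ 2 + c ^ 2) := by ring
      rw [e, hn, hsum]
      exact dvd_add (Dvd.dvd.mul_left (Dvd.dvd.mul_right (dvd_pow_self a two_ne_zero) n) _)
        (Dvd.dvd.mul_right dvd_rfl _)
    exact (hab.pow_right (n := 2)).dvd_of_dvd_mul_left hmul
  have hag : a ∣ g := Int.dvd_coe_gcd (dvd_pow_self a two_ne_zero) hadvd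
  -- g ∣ a
  have hga : g ∣ a := by
    have hg1 : g ∣ a ^ 2 := Int.gcd_dvd_left _ _
    have hg2 : g ∣ c ^ 2 * bb ^ 2 + 1 := Int.gcd_dvd_right _ _
    have hgsum : g ∣ a * (3 * b * c - a) := by
      rw [← hsum]
      have e : b ^ 2 + c ^ 2 =
          b ^ 2 * (c ^ 2 * bb ^ 2 + 1) - c ^ 2 * (b ^ 2 * bb ^ 2 - 1) := by ring
      rw [e, hn]
      exact dvd_sub (hg2.mul_left _) ((hg1.mul_right n).mul_left _)
    have hcp2 : IsCoprime (a ^ 2) (3 * b * c - a) := hkey.pow_left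
    have hcop : IsCoprime g (3 * b * c - a) :=
      IsCoprime.of_isCoprime_of_dvd_left hcp2 hg1
    exact hcop.dvd_of_dvd_mul_right hgsum
  have hge : g = a := Int.dvd_antisymm (Int.ofNat_nonneg _) ha.le hga hag
  refine ⟨hge, ?_⟩
  rw [hge, sq]
  exact Int.mul_ediv_cancel a ha.ne'
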